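/- arXiv:2211.04499 — 2 statements merged into one kernel-verified Lean document; each statement's English description precedes it below -/
import Mathlib

section
/- Let H be a finite simple graph with at least one edge that is both vertex-transitive and edge-transitive, with adjacency matrix A. If Z is any entrywise nonnegative, real symmetric positive semidefinite matrix with rows and columns indexed by V(H), then sum(Z) ≤ (1 + λ_max(H)/|λ_min(H)|) · sum((J − A) ∘ Z), where J is the all-ones matrix, ∘ denotes the entrywise (Schur) product, and sum(M) denotes the sum of all entries of M. -/
open Matrix Finset

namespace SpectralFrac

variable {V : Type*}

/-- The real adjacency matrix of a simple graph is Hermitian. -/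
theorem adjMatrix_isHermitian [Fintype V] [DecidableEq V] (G : SimpleGraph V)
    [DecidableRel G.Adj] : (G.adjMatrix ℝ).IsHermitian := by
  rw [Matrix.IsHermitian, Matrix.conjTranspose_eq_transpose_of_trivial]
  exact G.isSymm_adjMatrix

/-- `s⁺(G)`: the sum of the squares of the positive eigenvalues of the adjacency matrix. -/
noncomputable def sPos [Fintype V] [DecidableEq V] (G : SimpleGraph V) [DecidableRel G.Adj] : ℝ :=
  ∑ i, if 0 < (adjMatrix_isHermitian G).eigenvalues i
    then ((adjMatrix_isHermitian G).eigenvalues i) ^ 2 else 0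

/-- `s⁻(G)`: the sum of the squares of the negative eigenvalues of the adjacency matrix. -/
noncomputable def sNeg [Fintype V] [DecidableEq V] (G : SimpleGraph V) [DecidableRel G.Adj] : ℝ :=
  ∑ i, if (adjMatrix_isHermitian G).eigenvalues i < 0
    then ((adjMatrix_isHermitian G).eigenvalues i) ^ 2 else 0

/-- The largest eigenvalue of the adjacency matrix of `G`. -/
noncomputable def lamMax [Fintype V] [DecidableEq V] (G : SimpleGraph V) [DecidableRel G.Adj] : ℝ :=
  ⨆ i, (adjMatrix_isHermitian G).eigenvalues i

/-- The smallest eigenvalue of the adjacency matrix of `G`. -/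
noncomputable def lamMin [Fintype V] [DecidableEq V] (G : SimpleGraph V) [DecidableRel G.Adj] : ℝ :=
  ⨅ i, (adjMatrix_isHermitian G).eigenvalues i

/-- A graph is edge-transitive if its automorphism group acts transitively on edges. -/
def IsEdgeTransitive (H : SimpleGraph V) : Prop :=
  ∀ ⦃u v x y : V⦄, H.Adj u v → H.Adj x y → ∃ π : H ≃g H, s(π u, π v) = s(x, y)

/-- A graph is vertex-transitive if its automorphism group acts transitively on vertices. -/
def IsVertexTransitive (H : SimpleGraph V) : Prop :=
  ∀ u v : V, ∃ π : H ≃g H, π u = v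

/-- The Kneser graph `K_{n;k}`: vertices are `k`-subsets of an `n`-set, adjacent iff disjoint. -/
def kneserGraph (n k : ℕ) : SimpleGraph {s : Finset (Fin n) // s.card = k} where
  Adj a b := a ≠ b ∧ Disjoint a.1 b.1
  symm := ⟨fun a b h => ⟨h.1.symm, h.2.symm⟩⟩
  loopless := ⟨fun a h => h.1 rfl⟩

instance kneserGraph.adjDecidable (n k : ℕ) : DecidableRel (kneserGraph n k).Adj :=
  fun a b => inferInstanceAs (Decidable (a ≠ b ∧ Disjoint a.1 b.1))

/-- The fractional chromatic number: the infimum of `n / k` over all pairs `(n, k)` such that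
`G` admits a homomorphism into the Kneser graph `K_{n;k}`. -/
noncomputable def fracChromaticNumber (G : SimpleGraph V) : ℝ :=
  sInf {q : ℝ | ∃ n k : ℕ, 0 < k ∧ Nonempty (G →g kneserGraph n k) ∧ q = (n : ℝ) / k}

/-- The automorphism group of `H`, as a finset of permutations of the vertices. -/
def autSet [Fintype V] [DecidableEq V] (H : SimpleGraph V) [DecidableRel H.Adj] :
    Finset (Equiv.Perm V) :=
  Finset.univ.filter fun π => ∀ u v, H.Adj (π u) (π v) ↔ H.Adj u v

end SpectralFrac


namespace SpectralFrac
section Aux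

variable [Fintype V] [DecidableEq V]

lemma quadform_decomp (A : Matrix V V ℝ) (hA : A.IsHermitian) (w : V → ℝ) :
    ∃ c : V → ℝ, (w ⬝ᵥ A *ᵥ w = ∑ i, hA.eigenvalues i * c i ^ 2) ∧ (w ⬝ᵥ w = ∑ i, c i ^ 2) := by
  set U : Matrix V V ℝ := (hA.eigenvectorUnitary : Matrix V V ℝ) with hU
  have hstar : star U = Uᵀ := Matrix.conjTranspose_eq_transpose_of_trivial U
  have hUU : U * Uᵀ = 1 := by
    rw [← hstar]
    exact (Matrix.mem_unitaryGroup_iff).mp (hA.eigenvectorUnitary).2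
  refine ⟨Uᵀ *ᵥ w, ?_, ?_⟩
  · conv_lhs => rw [hA.spectral_theorem]
    rw [Unitary.conjStarAlgAut_apply, hstar, ← hU]
    rw [← Matrix.mulVec_mulVec, ← Matrix.mulVec_mulVec, Matrix.dotProduct_mulVec,
      ← Matrix.mulVec_transpose]
    simp [dotProduct, Matrix.mulVec_diagonal, mul_comm, sq, mul_assoc, mul_left_comm]
  · have h2 : ∑ i, (Uᵀ *ᵥ w) i ^ 2 = (Uᵀ *ᵥ w) ⬝ᵥ (Uᵀ *ᵥ w) := by
      simp [dotProduct, sq]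
    rw [h2, Matrix.dotProduct_mulVec, ← Matrix.mulVec_transpose, Matrix.transpose_transpose,
      Matrix.mulVec_mulVec, hUU, Matrix.one_mulVec]

lemma rayleigh_le (A : Matrix V V ℝ) (hA : A.IsHermitian) (w : V → ℝ) :
    w ⬝ᵥ A *ᵥ w ≤ (⨆ i, hA.eigenvalues i) * (w ⬝ᵥ w) := by
  obtain ⟨c, h1, h2⟩ := quadform_decomp A hA w
  rw [h1, h2, Finset.mul_sum]
  refine Finset.sum_le_sum fun i _ => ?_
  have := le_ciSup (Set.Finite.bddAbove (Set.finite_range hA.eigenvalues)) i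
  nlinarith [sq_nonneg (c i)]

lemma le_rayleigh (A : Matrix V V ℝ) (hA : A.IsHermitian) (w : V → ℝ) :
    (⨅ i, hA.eigenvalues i) * (w ⬝ᵥ w) ≤ w ⬝ᵥ A *ᵥ w := by
  obtain ⟨c, h1, h2⟩ := quadform_decomp A hA w
  rw [h1, h2, Finset.mul_sum]
  refine Finset.sum_le_sum fun i _ => ?_
  have := ciInf_le (Set.Finite.bddBelow (Set.finite_range hA.eigenvalues)) i
  nlinarith [sq_nonneg (c i)]

lemma mem_autSet_iff {H : SimpleGraph V} [DecidableRel H.Adj] {π : Equiv.Perm V} :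
    π ∈ autSet H ↔ ∀ u v, H.Adj (π u) (π v) ↔ H.Adj u v := by
  simp [autSet]

lemma one_mem_autSet {H : SimpleGraph V} [DecidableRel H.Adj] : (1 : Equiv.Perm V) ∈ autSet H := by
  simp [mem_autSet_iff]

lemma mul_mem_autSet {H : SimpleGraph V} [DecidableRel H.Adj] {π σ : Equiv.Perm V}
    (hπ : π ∈ autSet H) (hσ : σ ∈ autSet H) : π * σ ∈ autSet H := by
  rw [mem_autSet_iff] at *
  intro u v
  rw [Equiv.Perm.mul_apply, Equiv.Perm.mul_apply, hπ, hσ]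

lemma inv_mem_autSet {H : SimpleGraph V} [DecidableRel H.Adj] {σ : Equiv.Perm V}
    (hσ : σ ∈ autSet H) : σ⁻¹ ∈ autSet H := by
  rw [mem_autSet_iff] at *
  intro u v
  conv_rhs => rw [← (show σ (σ⁻¹ u) = u by simp), ← (show σ (σ⁻¹ v) = v by simp), hσ]

lemma iso_mem_autSet {H : SimpleGraph V} [DecidableRel H.Adj] (φ : H ≃g H) :
    φ.toEquiv ∈ autSet H := by
  rw [mem_autSet_iff]
  intro u v
  exact φ.map_adj_iff

lemma sum_autSet_mul_right {H : SimpleGraph V} [DecidableRel H.Adj] {σ : Equiv.Perm V}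
    (hσ : σ ∈ autSet H) (F : Equiv.Perm V → ℝ) :
    ∑ π ∈ autSet H, F (π * σ) = ∑ π ∈ autSet H, F π := by
  refine Finset.sum_equiv (Equiv.mulRight σ) (fun π => ?_) (fun π _ => rfl)
  constructor
  · intro h; exact mul_mem_autSet h hσ
  · intro h
    have := mul_mem_autSet h (inv_mem_autSet hσ)
    simpa using this

end Aux
end SpectralFrac

/-- **Lemma.** Let `H` be vertex- and edge-transitive with an edge and adjacency matrix `A`.
For any entrywise nonnegative real symmetric PSD matrix `Z` indexed by `V(H)`,
`sum(Z) ≤ (1 + λ_max(H)/|λ_min(H)|) · sum((J − A) ∘ Z)`. -/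
theorem SpectralFrac.nonneg_psd_sum_bound {V : Type*} [Fintype V] [DecidableEq V]
    (H : SimpleGraph V) [DecidableRel H.Adj]
    (hHe : H.edgeSet.Nonempty) (hvt : IsVertexTransitive H) (het : IsEdgeTransitive H)
    (Z : Matrix V V ℝ) (hZnn : ∀ u v, 0 ≤ Z u v) (hZpsd : Z.PosSemidef) :
    ∑ u, ∑ v, Z u v ≤
      (1 + lamMax H / |lamMin H|) * ∑ u, ∑ v, (1 - H.adjMatrix ℝ u v) * Z u v := by
  classical
  obtain ⟨u₀, v₀, huv⟩ : ∃ u v, H.Adj u v := by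
    obtain ⟨e, he⟩ := hHe
    induction e with
    | _ u v => exact ⟨u, v, he⟩
  haveI : Nonempty V := ⟨u₀⟩
  set A := H.adjMatrix ℝ with hAdef
  have hA := adjMatrix_isHermitian H
  have hAapp : ∀ u v, A u v = if H.Adj u v then 1 else 0 := fun u v => rfl
  have hAnn : ∀ u v, (0:ℝ) ≤ A u v := by
    intro u v; rw [hAapp]; positivity
  set G := autSet H with hGdef
  -- sums over V reindexed by a permutation
  have hsumV : ∀ (σ : Equiv.Perm V) (f : V → ℝ), ∑ v, f (σ v) = ∑ v, f v :=
    fun σ f => Equiv.sum_comp σ f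
  have hAinv : ∀ {σ : Equiv.Perm V}, σ ∈ G → ∀ u v, A (σ u) (σ v) = A u v := by
    intro σ hσ u v
    simp only [hAapp, mem_autSet_iff.mp hσ u v]
  -- eigen data
  obtain ⟨i₀, hi₀⟩ := Finite.exists_min hA.eigenvalues
  have hmin : lamMin H = hA.eigenvalues i₀ :=
    le_antisymm (ciInf_le (Set.Finite.bddBelow (Set.finite_range _)) i₀) (le_ciInf hi₀)
  set x : V → ℝ := ⇑(hA.eigenvectorBasis i₀) with hxdef
  have hAx : A *ᵥ x = lamMin H • x := by
    rw [hmin]; exact hA.mulVec_eigenvectorBasis i₀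
  have hxnorm : ∑ u, x u * x u = 1 := by
    have h1 : ‖hA.eigenvectorBasis i₀‖ = 1 := hA.eigenvectorBasis.orthonormal.1 i₀
    have h2 : (inner ℝ (hA.eigenvectorBasis i₀) (hA.eigenvectorBasis i₀) : ℝ) = ∑ u, x u * x u := by
      rw [PiLp.inner_apply]
      exact Finset.sum_congr rfl fun u _ => by simp [hxdef, sq]
    rw [← h2, real_inner_self_eq_norm_sq, h1, one_pow]
  -- lamMin is at most -1
  have hne : u₀ ≠ v₀ := H.ne_of_adj huv
  have hlmin : lamMin H ≤ -1 := by
    set w : V → ℝ := Pi.single u₀ 1 - Pi.single v₀ 1 with hwdef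
    have hww : w ⬝ᵥ w = 2 := by
      simp only [hwdef, dotProduct, Pi.sub_apply, Pi.single_apply]
      rw [Finset.sum_eq_add_of_mem u₀ v₀ (mem_univ _) (mem_univ _) hne ?_]
      · norm_num [hne, hne.symm]
      · intro c _ hc
        simp [hc.1, hc.2]
    have hAww : w ⬝ᵥ A *ᵥ w = -2 := by
      have hexp : w ⬝ᵥ A *ᵥ w = A u₀ u₀ - A v₀ u₀ - (A u₀ v₀ - A v₀ v₀) := by
        simp [hwdef, dotProduct, Matrix.mulVec, dotProduct,
          mul_sub, sub_mul, Finset.sum_sub_distrib, Pi.single_apply, mul_ite,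
          Finset.sum_ite_eq', Finset.sum_ite_eq]
      rw [hexp, hAapp, hAapp, hAapp, hAapp]
      norm_num [huv, huv.symm, H.loopless.irrefl u₀, H.loopless.irrefl v₀]
    have h := le_rayleigh A hA w
    rw [hAww, hww] at h
    rw [lamMin] at *
    linarith
  -- regularity: constant row sums
  set n : ℝ := (Fintype.card V : ℝ) with hn
  have hn0 : 0 < n := by
    rw [hn]; exact_mod_cast Fintype.card_pos
  set dR : ℝ := ∑ v, A u₀ v with hdR
  have hrow : ∀ u, ∑ v, A u v = dR := by
    intro u
    obtain ⟨φ, hφ⟩ := hvt u₀ u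
    have hσ := iso_mem_autSet φ
    have hφu : φ.toEquiv u₀ = u := hφ
    calc ∑ v, A u v = ∑ v, A (φ.toEquiv u₀) (φ.toEquiv v) := by
          rw [hφu]; exact (hsumV φ.toEquiv (fun v => A u v)).symm
      _ = ∑ v, A u₀ v := by
          exact Finset.sum_congr rfl fun v _ => hAinv hσ u₀ v
  have hd1 : 1 ≤ dR := by
    rw [hdR]
    calc (1:ℝ) = A u₀ v₀ := by rw [hAapp]; simp [huv]
      _ ≤ ∑ v, A u₀ v := Finset.single_le_sum (fun v _ => hAnn u₀ v) (mem_univ v₀)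
  -- lamMax is at least dR
  have hlmax : dR ≤ lamMax H := by
    have h := rayleigh_le A hA (fun _ => 1)
    have h1 : (fun _ => (1:ℝ)) ⬝ᵥ A *ᵥ (fun _ => (1:ℝ)) = n * dR := by
      calc (fun _ => (1:ℝ)) ⬝ᵥ A *ᵥ (fun _ => (1:ℝ)) = ∑ u : V, ∑ v : V, A u v := by
            simp [dotProduct, Matrix.mulVec]
        _ = ∑ _u : V, dR := Finset.sum_congr rfl fun u _ => hrow u
        _ = n * dR := by rw [Finset.sum_const, Finset.card_univ, nsmul_eq_mul, hn]
    have h2 : (fun _ : V => (1:ℝ)) ⬝ᵥ (fun _ : V => (1:ℝ)) = n := by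
      calc (fun _ : V => (1:ℝ)) ⬝ᵥ (fun _ : V => (1:ℝ)) = ∑ _u : V, (1:ℝ) := by
            simp [dotProduct]
        _ = n := by rw [Finset.sum_const, Finset.card_univ, nsmul_eq_mul, hn, mul_one]
    rw [h1, h2] at h
    rw [lamMax]
    nlinarith [hn0, h]
  -- the averaged eigenvector matrix W
  set m : ℝ := (G.card : ℝ) with hm
  have hm0 : 0 < m := by
    rw [hm]
    exact_mod_cast Finset.card_pos.mpr ⟨1, one_mem_autSet⟩
  set W : V → V → ℝ := fun u v => ∑ π ∈ G, x (π u) * x (π v) with hW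
  have hWshift : ∀ {σ : Equiv.Perm V}, σ ∈ G → ∀ u v, W (σ u) (σ v) = W u v := by
    intro σ hσ u v
    calc W (σ u) (σ v) = ∑ π ∈ G, x ((π * σ) u) * x ((π * σ) v) := by
          simp [hW, Equiv.Perm.mul_apply]
      _ = W u v := by
          simp only [hW, hGdef]
          exact sum_autSet_mul_right hσ (fun π => x (π u) * x (π v))
  have hWsymm : ∀ u v, W u v = W v u := by
    intro u v
    simp [hW, mul_comm]
  have hWdiag : ∀ u, n * W u u = m := by
    have hconst : ∀ u, W u u = W u₀ u₀ := by
      intro u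
      obtain ⟨φ, hφ⟩ := hvt u₀ u
      have hφu : φ.toEquiv u₀ = u := hφ
      rw [← hφu]
      exact hWshift (iso_mem_autSet φ) u₀ u₀
    have hsum : ∑ u, W u u = m := by
      rw [hW]
      rw [Finset.sum_comm]
      rw [Finset.sum_congr rfl (fun π hπ => ?_), Finset.sum_const, nsmul_eq_mul, mul_one, hm]
      rw [hsumV π (fun v => x v * x v), hxnorm]
    intro u
    calc n * W u u = ∑ _v : V, W u u := by
          rw [Finset.sum_const, Finset.card_univ, nsmul_eq_mul, hn]
      _ = ∑ v, W v v := Finset.sum_congr rfl fun v _ => by rw [hconst u, hconst v]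
      _ = m := hsum
  have hWub : ∀ u v, n * W u v ≤ m := by
    intro u v
    have h1 : W u v ≤ (W u u + W v v) / 2 := by
      have hle : ∑ π ∈ G, x (π u) * x (π v)
          ≤ ∑ π ∈ G, (x (π u) * x (π u) + x (π v) * x (π v)) / 2 :=
        Finset.sum_le_sum fun π _ => by nlinarith [sq_nonneg (x (π u) - x (π v))]
      calc W u v = ∑ π ∈ G, x (π u) * x (π v) := by rw [hW]
        _ ≤ ∑ π ∈ G, (x (π u) * x (π u) + x (π v) * x (π v)) / 2 := hle
        _ = (W u u + W v v) / 2 := by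
            rw [← Finset.sum_div, Finset.sum_add_distrib, hW]
    nlinarith [hWdiag u, hWdiag v, hn0]
  have hWedge : ∀ u v, H.Adj u v → W u v = W u₀ v₀ := by
    intro u v huvadj
    obtain ⟨φ, hφ⟩ := het huvadj huv
    rw [Sym2.eq_iff] at hφ
    rcases hφ with ⟨h1, h2⟩ | ⟨h1, h2⟩
    · rw [← h1, ← h2]
      exact (hWshift (iso_mem_autSet φ) u v).symm
    · rw [hWsymm u₀ v₀, ← h1, ← h2]
      exact (hWshift (iso_mem_autSet φ) u v).symm
  have hquad : ∀ π ∈ G, ∑ u, ∑ v, A u v * (x (π u) * x (π v)) = lamMin H := by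
    intro π hπ
    calc ∑ u, ∑ v, A u v * (x (π u) * x (π v))
        = ∑ u, ∑ v, A (π u) (π v) * (x (π u) * x (π v)) :=
          Finset.sum_congr rfl fun u _ => Finset.sum_congr rfl fun v _ => by rw [hAinv hπ]
      _ = ∑ u, ∑ v, A (π u) v * (x (π u) * x v) :=
          Finset.sum_congr rfl fun u _ => hsumV π (fun v => A (π u) v * (x (π u) * x v))
      _ = ∑ u, ∑ v, A u v * (x u * x v) :=
          hsumV π (fun u => ∑ v, A u v * (x u * x v))
      _ = x ⬝ᵥ A *ᵥ x := by
          simp only [dotProduct, Matrix.mulVec, Finset.mul_sum]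
          exact Finset.sum_congr rfl fun u _ => Finset.sum_congr rfl fun v _ => by ring
      _ = lamMin H := by
          rw [hAx]
          simp only [dotProduct, Pi.smul_apply, smul_eq_mul]
          rw [show ∑ u, x u * (lamMin H * x u) = lamMin H * ∑ u, x u * x u by
            rw [Finset.mul_sum]; exact Finset.sum_congr rfl fun u _ => by ring]
          rw [hxnorm, mul_one]
  have hedgeval : n * dR * W u₀ v₀ = m * lamMin H := by
    have hl : ∑ u, ∑ v, A u v * W u v = n * dR * W u₀ v₀ := by
      have hc : ∀ u v, A u v * W u v = A u v * W u₀ v₀ := by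
        intro u v
        by_cases hadj : H.Adj u v
        · rw [hWedge u v hadj]
        · rw [hAapp]; simp [hadj]
      calc ∑ u, ∑ v, A u v * W u v = ∑ u, ∑ v, A u v * W u₀ v₀ :=
            Finset.sum_congr rfl fun u _ => Finset.sum_congr rfl fun v _ => hc u v
        _ = ∑ u, (∑ v, A u v) * W u₀ v₀ := by
            exact Finset.sum_congr rfl fun u _ => (Finset.sum_mul _ _ _).symm
        _ = ∑ _u : V, dR * W u₀ v₀ :=
            Finset.sum_congr rfl fun u _ => by rw [hrow u]
        _ = n * dR * W u₀ v₀ := by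
            rw [Finset.sum_const, Finset.card_univ, nsmul_eq_mul, hn, mul_assoc]
    have hr : ∑ u, ∑ v, A u v * W u v = m * lamMin H := by
      calc ∑ u, ∑ v, A u v * W u v
          = ∑ u, ∑ v, ∑ π ∈ G, A u v * (x (π u) * x (π v)) := by
            simp only [hW, Finset.mul_sum]
        _ = ∑ u, ∑ π ∈ G, ∑ v, A u v * (x (π u) * x (π v)) :=
            Finset.sum_congr rfl fun u _ => Finset.sum_comm
        _ = ∑ π ∈ G, ∑ u, ∑ v, A u v * (x (π u) * x (π v)) := Finset.sum_comm
        _ = ∑ _π ∈ G, lamMin H := Finset.sum_congr rfl hquad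
        _ = m * lamMin H := by rw [Finset.sum_const, nsmul_eq_mul, hm]
    linarith [hl, hr]
  have hWZ : 0 ≤ ∑ u, ∑ v, W u v * Z u v := by
    have hswap : ∑ u, ∑ v, W u v * Z u v
        = ∑ π ∈ G, ∑ u, ∑ v, (x (π u) * x (π v)) * Z u v := by
      calc ∑ u, ∑ v, W u v * Z u v
          = ∑ u, ∑ v, ∑ π ∈ G, (x (π u) * x (π v)) * Z u v := by
            simp only [hW, Finset.sum_mul]
        _ = ∑ u, ∑ π ∈ G, ∑ v, (x (π u) * x (π v)) * Z u v :=
            Finset.sum_congr rfl fun u _ => Finset.sum_comm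
        _ = ∑ π ∈ G, ∑ u, ∑ v, (x (π u) * x (π v)) * Z u v := Finset.sum_comm
    rw [hswap]
    refine Finset.sum_nonneg fun π _ => ?_
    have h := hZpsd.dotProduct_mulVec_nonneg (fun u => x (π u))
    have hstar : star (fun u => x (π u)) = fun u => x (π u) := by
      funext u; exact star_trivial _
    rw [hstar] at h
    calc (0:ℝ) ≤ (fun u => x (π u)) ⬝ᵥ Z *ᵥ (fun u => x (π u)) := h
      _ = ∑ u, ∑ v, (x (π u) * x (π v)) * Z u v := by
          simp only [dotProduct, Matrix.mulVec, Finset.mul_sum]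
          exact Finset.sum_congr rfl fun u _ => Finset.sum_congr rfl fun v _ => by ring
  -- final assembly
  set S := ∑ u, ∑ v, Z u v with hS
  set E := ∑ u, ∑ v, A u v * Z u v with hE
  set L := lamMax H with hL
  set ν : ℝ := -lamMin H with hν
  have hν1 : (1:ℝ) ≤ ν := by rw [hν]; linarith
  have hν0 : (0:ℝ) < ν := by linarith
  set c : ℝ := dR * n / m with hc
  have hc0 : 0 ≤ c := by rw [hc]; positivity
  have hcoeff : ∀ u v, 0 ≤ (L - (L + ν) * A u v) - c * W u v := by
    intro u v
    by_cases hadj : H.Adj u v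
    · have hcb : c * W u₀ v₀ = lamMin H := by
        rw [hc, div_mul_eq_mul_div, eq_comm, eq_div_iff (ne_of_gt hm0)]
        linear_combination -hedgeval
      rw [hAapp, if_pos hadj, hWedge u v hadj, hcb]
      rw [hν]
      linarith
    · have h1 : n * W u v ≤ m := hWub u v
      have h2 : c * W u v ≤ dR := by
        rw [hc, div_mul_eq_mul_div, div_le_iff₀ hm0]
        have h3 := mul_le_mul_of_nonneg_left h1 (le_trans zero_le_one hd1)
        rw [← mul_assoc] at h3
        exact h3
      rw [hAapp, if_neg hadj]
      have hdL : dR ≤ L := hlmax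
      linarith
  have key : 0 ≤ L * S - (L + ν) * E := by
    have hsplit : L * S - (L + ν) * E
        = (∑ u, ∑ v, ((L - (L + ν) * A u v) - c * W u v) * Z u v)
          + c * (∑ u, ∑ v, W u v * Z u v) := by
      rw [hS, hE]
      simp only [Finset.mul_sum, ← Finset.sum_sub_distrib, ← Finset.sum_add_distrib]
      exact Finset.sum_congr rfl fun u _ => Finset.sum_congr rfl fun v _ => by ring
    rw [hsplit]
    refine add_nonneg ?_ (mul_nonneg hc0 hWZ)
    exact Finset.sum_nonneg fun u _ => Finset.sum_nonneg fun v _ =>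
      mul_nonneg (hcoeff u v) (hZnn u v)
  have habs : |lamMin H| = ν := by
    rw [hν, abs_of_neg (by linarith : lamMin H < 0)]
  rw [habs]
  have hT : ∑ u, ∑ v, (1 - A u v) * Z u v = S - E := by
    rw [hS, hE]
    simp only [← Finset.sum_sub_distrib]
    exact Finset.sum_congr rfl fun u _ => Finset.sum_congr rfl fun v _ => by ring
  rw [hT, ← sub_nonneg]
  have hLν : L / ν * ν = L := div_mul_cancel₀ _ (ne_of_gt hν0)
  have hfinal : (1 + L / ν) * (S - E) - S = (L * S - (L + ν) * E) / ν := by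
    rw [eq_div_iff (ne_of_gt hν0)]
    linear_combination (S - E) * hLν
  rw [hfinal]
  exact div_nonneg key (by linarith)
end

section
/- Let G be a finite simple graph equipped with an H-partition ⨆_{u ∈ V(H)} V_u for some finite simple graph H, and let X be a real symmetric positive semidefinite matrix with rows and columns indexed by V(G). Then the matrix Z with rows and columns indexed by V(H) defined by Z_{u,v} = ‖X_[u,v]‖² (the sum of the squares of the entries of the block X_[u,v]) is entrywise nonnegative and positive semidefinite. -/
open Matrix Finset

/-- Swapping an outer double sum with an inner double sum. -/
theorem sum_swap4 {α β γ δ M : Type*} [Fintype α] [Fintype β] [Fintype γ] [Fintype δ]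
    [AddCommMonoid M] (f : α → β → γ → δ → M) :
    (∑ a, ∑ b, ∑ k, ∑ l, f a b k l) = ∑ k, ∑ l, ∑ a, ∑ b, f a b k l :=
  calc (∑ a, ∑ b, ∑ k, ∑ l, f a b k l)
      = ∑ a, ∑ k, ∑ b, ∑ l, f a b k l :=
        Finset.sum_congr rfl fun _ _ => Finset.sum_comm
    _ = ∑ k, ∑ a, ∑ b, ∑ l, f a b k l := Finset.sum_comm
    _ = ∑ k, ∑ a, ∑ l, ∑ b, f a b k l :=
        Finset.sum_congr rfl fun _ _ => Finset.sum_congr rfl fun _ _ => Finset.sum_comm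
    _ = ∑ k, ∑ l, ∑ a, ∑ b, f a b k l :=
        Finset.sum_congr rfl fun _ _ => Finset.sum_comm

/-- **Claim.** Given an `H`-partition of `G` (via `P : V(G) → V(H)`) and a real symmetric PSD
matrix `X` indexed by `V(G)`, the matrix `Z` with `Z_{u,v} = ‖X_[u,v]‖²` is entrywise nonnegative
and PSD. -/
theorem SpectralFrac.blockNormSq_nonneg_posSemidef {VG W : Type*} [Fintype VG]
    [Fintype W] [DecidableEq W]
    (H : SimpleGraph W) (G : SimpleGraph VG) (P : VG → W)
    (X : Matrix VG VG ℝ) (hX : X.PosSemidef) (Z : Matrix W W ℝ)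
    (hZ : ∀ u v, Z u v = ∑ a, ∑ b, if P a = u ∧ P b = v then (X a b) ^ 2 else 0) :
    (∀ u v, 0 ≤ Z u v) ∧ Z.PosSemidef := by
  classical
  have hXsym : ∀ a b : VG, X a b = X b a := fun a b => by
    have := congrFun (congrFun hX.1 b) a
    simpa using this
  refine ⟨fun u v => ?_, Matrix.PosSemidef.of_dotProduct_mulVec_nonneg ?_ fun y => ?_⟩
  · rw [hZ]
    refine Finset.sum_nonneg fun a _ => Finset.sum_nonneg fun b _ => ?_
    split <;> positivity
  · rw [Matrix.IsHermitian, Matrix.conjTranspose_eq_transpose_of_trivial]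
    ext u v
    simp only [Matrix.transpose_apply, hZ]
    rw [Finset.sum_comm]
    refine Finset.sum_congr rfl fun a _ => Finset.sum_congr rfl fun b _ => ?_
    rw [hXsym a b]
    exact if_congr and_comm rfl rfl
  · obtain ⟨S, hSsym, hXS⟩ : ∃ S : Matrix VG VG ℝ, (∀ i j : VG, S i j = S j i) ∧
        ∀ a b : VG, X a b = ∑ k, S a k * S b k := by
      open scoped MatrixOrder in
      have hSpsd : (CFC.sqrt X).PosSemidef := (CFC.sqrt_nonneg X).posSemidef
      have hSsym : ∀ i j : VG, CFC.sqrt X i j = CFC.sqrt X j i := fun i j => by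
        have := congrFun (congrFun hSpsd.1 j) i
        simpa using this
      refine ⟨CFC.sqrt X, hSsym, fun a b => ?_⟩
      open scoped MatrixOrder in
      have h1 : X = CFC.sqrt X * CFC.sqrt X := (CFC.sqrt_mul_sqrt_self X hX.nonneg).symm
      rw [congrFun (congrFun h1 a) b, Matrix.mul_apply]
      exact Finset.sum_congr rfl fun k _ => by rw [hSsym k b]
    set z : VG → ℝ := fun a => y (P a) with hz
    have inner : ∀ (c : ℝ) (a b : VG),
        (∑ u, ∑ v, y u * ((if P a = u ∧ P b = v then c else 0) * y v))
          = z a * z b * c := by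
      intro c a b
      rw [Finset.sum_eq_single (P a)]
      · rw [Finset.sum_eq_single (P b)]
        · simp only [hz, and_self, if_true]; ring
        · intro v _ hv
          simp [Ne.symm hv]
        · simp
      · intro u _ hu
        refine Finset.sum_eq_zero fun v _ => ?_
        simp [Ne.symm hu]
      · simp
    have key : (star y) ⬝ᵥ (Z *ᵥ y) = ∑ a, ∑ b, z a * z b * (X a b) ^ 2 := by
      calc (star y) ⬝ᵥ (Z *ᵥ y) = ∑ u, ∑ v, y u * (Z u v * y v) := by
            simp [dotProduct, Matrix.mulVec, Finset.mul_sum]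
        _ = ∑ u, ∑ v, ∑ a, ∑ b,
              y u * ((if P a = u ∧ P b = v then X a b ^ 2 else 0) * y v) := by
            refine Finset.sum_congr rfl fun u _ => Finset.sum_congr rfl fun v _ => ?_
            rw [hZ]
            simp only [Finset.sum_mul, Finset.mul_sum]
        _ = ∑ a, ∑ b, ∑ u, ∑ v,
              y u * ((if P a = u ∧ P b = v then X a b ^ 2 else 0) * y v) :=
            sum_swap4 _
        _ = ∑ a, ∑ b, z a * z b * (X a b) ^ 2 :=
            Finset.sum_congr rfl fun a _ => Finset.sum_congr rfl fun b _ => inner _ a b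
    rw [key]
    have expand : (∑ a, ∑ b, z a * z b * (X a b) ^ 2)
        = ∑ k, ∑ l, (∑ a, z a * (S a k * S a l)) ^ 2 := by
      have h2 : ∀ a b : VG, z a * z b * (X a b) ^ 2
          = ∑ k, ∑ l, (z a * (S a k * S a l)) * (z b * (S b k * S b l)) := by
        intro a b
        rw [hXS, sq, Finset.sum_mul_sum]
        simp only [Finset.mul_sum]
        exact Finset.sum_congr rfl fun k _ => Finset.sum_congr rfl fun l _ => by ring
      simp only [h2]
      rw [sum_swap4]
      refine Finset.sum_congr rfl fun k _ => Finset.sum_congr rfl fun l _ => ?_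
      rw [sq, Finset.sum_mul_sum]
    rw [expand]
    exact Finset.sum_nonneg fun k _ => Finset.sum_nonneg fun l _ => sq_nonneg _
end
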